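/- Let Ω ⊂ ℝⁿ be a bounded open set, T > 0, m > 2, k > 0. Let u₀, v₀ : closure(Ω) → ℝ be continuous with u₀ ≥ 0, v₀ ≥ 0, u₀ v₀ ≡ 0 and u₀ not identically zero. Let u : closure(Ω) × [0,T] → ℝ be continuous with u ≥ 0, C² in x and C¹ in t on Ω × (0,T], satisfying ∂ₜ u(x,t) = Δ u(x,t) − k v₀(x) u(x,t)^m exp(−k ∫₀ᵗ u(x,τ) dτ) in Ω × (0,T], u(x,t) = 0 for x ∈ ∂Ω and t ∈ (0,T], and u(·,0) = u₀. Let u_∞ : closure(Ω) × [0,T] → ℝ be continuous, C² in x and C¹ in t on Ω × (0,T] with ∂ₜ u_∞ and Δ u_∞ extending continuously to closure(Ω) × [0,T], satisfying ∂ₜ u_∞ = Δ u_∞ in Ω × (0,T], u_∞(x,t) = 0 for x ∈ ∂Ω and t ∈ (0,T], and u_∞(·,0) = u₀. Let M > 0 be any constant with |∂ₜ u_∞(x,t)| ≤ M on closure(Ω) × [0,T]. Then for all (x,t) ∈ closure(Ω) × [0,T]: u_∞(x,t) − M t ≤ u(x,t) ≤ u_∞(x,t). -/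

import Mathlib

open Set Filter Topology

section Helpers

variable {E : Type*} [NormedAddCommGroup E] [NormedSpace ℝ E]

/-- Second derivative test at a local max: if `F` has derivative `G t` near `0`,
`G` has derivative `c` at `0`, and `F` has a local max at `0`, then `c ≤ 0`. -/
lemma sdt_max {F G : ℝ → ℝ} {c : ℝ} (hmax : IsLocalMax F 0)
    (hF : ∀ᶠ t in 𝓝 (0:ℝ), HasDerivAt F (G t) t) (hG : HasDerivAt G c 0) : c ≤ 0 := by
  by_contra hc
  push_neg at hc
  have hF0 : HasDerivAt F (G 0) 0 := hF.self_of_nhds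
  have hG0 : G 0 = 0 := by
    have h := hmax.deriv_eq_zero
    rwa [hF0.deriv] at h
  have hslope : ∀ᶠ t in 𝓝 (0:ℝ), t ≠ 0 → 0 < slope G 0 t := by
    have := (hasDerivAt_iff_tendsto_slope.mp hG).eventually (eventually_gt_nhds hc)
    rwa [eventually_nhdsWithin_iff] at this
  obtain ⟨ε, hε, hball⟩ := Metric.eventually_nhds_iff.mp ((hF.and hmax).and hslope)
  set δ := ε / 2 with hδdef
  have hδ : 0 < δ := by positivity
  have hkey : ∀ t ∈ Icc (0:ℝ) δ,
      (HasDerivAt F (G t) t ∧ F t ≤ F 0) ∧ (t ≠ 0 → 0 < slope G 0 t) := by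
    intro t ht
    apply hball
    rw [Real.dist_eq, sub_zero, abs_of_nonneg ht.1]
    calc t ≤ δ := ht.2
    _ < ε := by rw [hδdef]; linarith
  have hmono : StrictMonoOn F (Icc (0:ℝ) δ) := by
    apply strictMonoOn_of_deriv_pos (convex_Icc _ _)
    · exact fun t ht => ((hkey t ht).1.1.continuousAt).continuousWithinAt
    · intro t ht
      rw [interior_Icc] at ht
      rw [((hkey t ⟨ht.1.le, ht.2.le⟩).1.1).deriv]
      have hs := (hkey t ⟨ht.1.le, ht.2.le⟩).2 (ne_of_gt ht.1)
      rw [slope_def_field, hG0, sub_zero, sub_zero] at hs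
      have := mul_pos hs ht.1
      rwa [div_mul_cancel₀ _ (ne_of_gt ht.1)] at this
  have hlt : F 0 < F δ := hmono (left_mem_Icc.2 hδ.le) (right_mem_Icc.2 hδ.le) hδ
  exact absurd ((hkey δ (right_mem_Icc.2 hδ.le)).1.2) (not_le.2 hlt)

/-- Derivatives along a line of a `C²` function. -/
lemma line_hasDeriv {f : E → ℝ} {s : Set E} (hs : IsOpen s) {x : E} (hx : x ∈ s)
    (hf : ContDiffOn ℝ 2 f s) (v : E) :
    (∀ᶠ t in 𝓝 (0:ℝ), HasDerivAt (fun r : ℝ => f (x + r • v)) (fderiv ℝ f (x + t • v) v) t) ∧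
    HasDerivAt (fun t : ℝ => fderiv ℝ f (x + t • v) v) (iteratedFDeriv ℝ 2 f x ![v, v]) 0 := by
  have hL : ∀ t : ℝ, HasDerivAt (fun r : ℝ => x + r • v) v t := fun t => by
    simpa using ((hasDerivAt_id t).smul_const v).const_add x
  constructor
  · have hmem : ∀ᶠ t in 𝓝 (0:ℝ), x + t • v ∈ s := by
      have hc : ContinuousAt (fun t : ℝ => x + t • v) 0 := (hL 0).continuousAt
      have h0 : x + (0:ℝ) • v ∈ s := by simpa using hx
      exact hc (hs.mem_nhds h0)
    filter_upwards [hmem] with t ht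
    have hdf : DifferentiableAt ℝ f (x + t • v) :=
      (hf.contDiffAt (hs.mem_nhds ht)).differentiableAt two_ne_zero
    exact hdf.hasFDerivAt.comp_hasDerivAt t (hL t)
  · have hfd : DifferentiableAt ℝ (fderiv ℝ f) x :=
      ((hf.contDiffAt (hs.mem_nhds hx)).fderiv_right (m := 1) one_add_one_eq_two.le).differentiableAt
        one_ne_zero
    have h1 : HasFDerivAt (fderiv ℝ f) (fderiv ℝ (fderiv ℝ f) x) x := hfd.hasFDerivAt
    have h2 : HasDerivAt (fun t : ℝ => fderiv ℝ f (x + t • v))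
        (fderiv ℝ (fderiv ℝ f) x v) 0 := by
      have h0 : x + (0:ℝ) • v = x := by simp
      have h1' : HasFDerivAt (fderiv ℝ f) (fderiv ℝ (fderiv ℝ f) x) (x + (0:ℝ) • v) :=
        h0.symm ▸ h1
      exact h1'.comp_hasDerivAt 0 (hL 0)
    have h3 := h2.clm_apply (hasDerivAt_const 0 v)
    rw [iteratedFDeriv_two_apply]
    simpa using h3

/-- At a local maximum of `f - g` with `f, g` both `C²`, the diagonal second
derivatives of `f` are at most those of `g`. -/
lemma diag_le_of_localMax {f g : E → ℝ} {s : Set E} (hs : IsOpen s) {x : E} (hx : x ∈ s)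
    (hf : ContDiffOn ℝ 2 f s) (hg : ContDiffOn ℝ 2 g s)
    (hmax : IsLocalMax (fun y => f y - g y) x) (v : E) :
    iteratedFDeriv ℝ 2 f x ![v, v] ≤ iteratedFDeriv ℝ 2 g x ![v, v] := by
  obtain ⟨hf1, hf2⟩ := line_hasDeriv hs hx hf v
  obtain ⟨hg1, hg2⟩ := line_hasDeriv hs hx hg v
  have h0 : x + (0:ℝ) • v = x := by simp
  have hmax' : IsLocalMax (fun t : ℝ => f (x + t • v) - g (x + t • v)) 0 := by
    have hc : ContinuousAt (fun t : ℝ => x + t • v) 0 :=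
      (continuous_const.add (continuous_id.smul continuous_const)).continuousAt
    have hev : ∀ᶠ t in 𝓝 (0:ℝ), f (x + t • v) - g (x + t • v) ≤ f x - g x := by
      have hc' : Filter.Tendsto (fun t : ℝ => x + t • v) (𝓝 0) (𝓝 x) := by
        rwa [ContinuousAt, h0] at hc
      exact hc'.eventually hmax
    simpa only [IsLocalMax, IsMaxFilter, h0] using hev
  have := sdt_max hmax'
    (hf1.and hg1 |>.mono fun t ⟨a, b⟩ => a.sub b) (hf2.sub hg2)
  linarith

/-- At a max over `[0,T]` attained at `t₀ ∈ (0,T]`, the derivative within `[0,T]` is `≥ 0`. -/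
lemma deriv_nonneg_at_right_max {f : ℝ → ℝ} {f' T t₀ : ℝ} (ht₀ : t₀ ∈ Ioc 0 T)
    (hd : HasDerivWithinAt f f' (Icc 0 T) t₀) (hmax : ∀ t ∈ Icc 0 T, f t ≤ f t₀) : 0 ≤ f' := by
  have hsub : Icc (0:ℝ) t₀ ⊆ Icc 0 T := Icc_subset_Icc le_rfl ht₀.2
  have hd' : HasDerivWithinAt f f' (Icc 0 t₀) t₀ := hd.mono hsub
  have hslope := hasDerivWithinAt_iff_tendsto_slope.mp hd'
  have hIco : Icc (0:ℝ) t₀ \ {t₀} = Ico 0 t₀ := Icc_sdiff_right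
  rw [hIco] at hslope
  have hne : (𝓝[Ico (0:ℝ) t₀] t₀).NeBot := by
    apply mem_closure_iff_nhdsWithin_neBot.mp
    rw [closure_Ico (ne_of_lt ht₀.1)]
    exact right_mem_Icc.2 ht₀.1.le
  refine ge_of_tendsto hslope (eventually_nhdsWithin_of_forall fun t ht => ?_)
  rw [slope_def_field]
  exact div_nonneg_of_nonpos (sub_nonpos.2 (hmax t (hsub ⟨ht.1, ht.2.le⟩)))
    (sub_nonpos.2 ht.2.le)

end Helpers


/-- The Laplacian of `f : ℝⁿ → ℝ` at `x`: the sum of the second partial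
derivatives in the coordinate directions. -/
noncomputable def laplacian {n : ℕ} (f : EuclideanSpace ℝ (Fin n) → ℝ)
    (x : EuclideanSpace ℝ (Fin n)) : ℝ :=
  ∑ i : Fin n, iteratedFDeriv ℝ 2 f x ![EuclideanSpace.single i 1, EuclideanSpace.single i 1]

set_option maxHeartbeats 1000000 in
/-- Dirichlet version of Lemma 2.4: if `u` is a classical solution of
`∂ₜ u = Δu − k v₀ u^m exp(−k ∫₀ᵗ u)` with homogeneous Dirichlet boundary values and
initial datum `u₀`, and `u_∞` solves the heat equation with the same boundary and initial
data, with `|∂ₜ u_∞| ≤ M` on `closure Ω × [0,T]`, then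
`u_∞(x,t) − M t ≤ u(x,t) ≤ u_∞(x,t)` on `closure Ω × [0,T]`. -/
theorem squeeze_between_heat_solutions (n : ℕ)
    (Ω : Set (EuclideanSpace ℝ (Fin n))) (hΩo : IsOpen Ω) (hΩb : Bornology.IsBounded Ω)
    (T : ℝ) (hT : 0 < T)
    (m : ℝ) (hm2 : 2 < m)
    (k : ℝ) (hk : 0 < k)
    (u₀ v₀ : EuclideanSpace ℝ (Fin n) → ℝ)
    (hu₀c : ContinuousOn u₀ (closure Ω)) (hv₀c : ContinuousOn v₀ (closure Ω))
    (hu₀nonneg : ∀ x ∈ closure Ω, 0 ≤ u₀ x) (hv₀nonneg : ∀ x ∈ closure Ω, 0 ≤ v₀ x)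
    (hsep : ∀ x ∈ closure Ω, u₀ x * v₀ x = 0)
    (hu₀ne : ∃ x ∈ closure Ω, u₀ x ≠ 0)
    -- the solution u of the scalar integro-differential equation
    (u : EuclideanSpace ℝ (Fin n) → ℝ → ℝ)
    (hucont : ContinuousOn (fun p : EuclideanSpace ℝ (Fin n) × ℝ => u p.1 p.2)
      (closure Ω ×ˢ Set.Icc 0 T))
    (hunonneg : ∀ x ∈ closure Ω, ∀ t ∈ Set.Icc (0 : ℝ) T, 0 ≤ u x t)
    (hux : ∀ t ∈ Set.Ioc 0 T, ContDiffOn ℝ 2 (fun y => u y t) Ω)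
    (hueq : ∀ x ∈ Ω, ∀ t ∈ Set.Ioc 0 T,
      HasDerivWithinAt (u x)
        (laplacian (fun y => u y t) x
          - k * v₀ x * u x t ^ m * Real.exp (-(k * ∫ τ in (0 : ℝ)..t, u x τ)))
        (Set.Icc 0 T) t)
    (hubdry : ∀ x ∈ frontier Ω, ∀ t ∈ Set.Ioc 0 T, u x t = 0)
    (huinit : ∀ x ∈ closure Ω, u x 0 = u₀ x)
    -- the heat solution uinf, its time derivative utinf and its Laplacian Linf,
    -- both extending continuously to closure Ω × [0,T]
    (uinf utinf Linf : EuclideanSpace ℝ (Fin n) → ℝ → ℝ)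
    (hi_cont : ContinuousOn (fun p : EuclideanSpace ℝ (Fin n) × ℝ => uinf p.1 p.2)
      (closure Ω ×ˢ Set.Icc 0 T))
    (hi_x : ∀ t ∈ Set.Ioc 0 T, ContDiffOn ℝ 2 (fun y => uinf y t) Ω)
    (hi_t : ∀ x ∈ Ω, ∀ t ∈ Set.Ioc 0 T, HasDerivWithinAt (uinf x) (utinf x t) (Set.Icc 0 T) t)
    (hi_tcont : ContinuousOn (fun p : EuclideanSpace ℝ (Fin n) × ℝ => utinf p.1 p.2)
      (closure Ω ×ˢ Set.Icc 0 T))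
    (hi_lap : ∀ x ∈ Ω, ∀ t ∈ Set.Ioc 0 T, Linf x t = laplacian (fun y => uinf y t) x)
    (hi_lapcont : ContinuousOn (fun p : EuclideanSpace ℝ (Fin n) × ℝ => Linf p.1 p.2)
      (closure Ω ×ˢ Set.Icc 0 T))
    (hi_heat : ∀ x ∈ Ω, ∀ t ∈ Set.Ioc 0 T, utinf x t = Linf x t)
    (hi_bdry : ∀ x ∈ frontier Ω, ∀ t ∈ Set.Ioc 0 T, uinf x t = 0)
    (hi_init : ∀ x ∈ closure Ω, uinf x 0 = u₀ x)
    (M : ℝ) (hM : 0 < M)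
    (hMbound : ∀ x ∈ closure Ω, ∀ t ∈ Set.Icc (0 : ℝ) T, |utinf x t| ≤ M) :
    ∀ x ∈ closure Ω, ∀ t ∈ Set.Icc (0 : ℝ) T,
      uinf x t - M * t ≤ u x t ∧ u x t ≤ uinf x t := by
  obtain ⟨x₁, hx₁, -⟩ := hu₀ne
  have hKc : IsCompact ((closure Ω) ×ˢ Icc (0:ℝ) T) :=
    hΩb.isCompact_closure.prod isCompact_Icc
  have hKne : ((closure Ω) ×ˢ Icc (0:ℝ) T).Nonempty :=
    ⟨(x₁, 0), hx₁, left_mem_Icc.2 hT.le⟩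
  have hfr : ∀ x ∈ closure Ω, x ∉ Ω → x ∈ frontier Ω := by
    intro x hx hxo
    rw [hΩo.frontier_eq]; exact ⟨hx, hxo⟩
  have hreact : ∀ x ∈ closure Ω, ∀ t ∈ Icc (0:ℝ) T,
      0 ≤ k * v₀ x * u x t ^ m * Real.exp (-(k * ∫ τ in (0:ℝ)..t, u x τ)) := by
    intro x hx t ht
    exact mul_nonneg (mul_nonneg (mul_nonneg hk.le (hv₀nonneg x hx))
      (Real.rpow_nonneg (hunonneg x hx t ht) m)) (Real.exp_nonneg _)
  -- FTC-type bound: where `u₀` vanishes, `uinf ≤ M t`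
  have hftc : ∀ x₀ ∈ Ω, u₀ x₀ = 0 → ∀ t₀ ∈ Icc (0:ℝ) T, uinf x₀ t₀ ≤ M * t₀ := by
    intro x₀ hx₀ hu0 t₀ ht₀
    have hcl : x₀ ∈ closure Ω := subset_closure hx₀
    have hcont : ContinuousOn (fun t => M * t - uinf x₀ t) (Icc 0 t₀) := by
      apply ContinuousOn.sub
      · exact (continuous_const.mul continuous_id).continuousOn
      · have h1 : ContinuousOn (fun t : ℝ => uinf x₀ t) (Icc 0 T) := by
          have hmap : ∀ t ∈ Icc (0:ℝ) T,
              ((x₀ : EuclideanSpace ℝ (Fin n)), t) ∈ (closure Ω) ×ˢ Icc (0:ℝ) T :=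
            fun t ht => ⟨hcl, ht⟩
          exact hi_cont.comp (Continuous.continuousOn (Continuous.prodMk_right x₀)) hmap
        exact h1.mono (Icc_subset_Icc le_rfl ht₀.2)
    have hd : ∀ t ∈ interior (Icc (0:ℝ) t₀),
        HasDerivAt (fun t => M * t - uinf x₀ t) (M - utinf x₀ t) t := by
      intro t ht
      rw [interior_Icc] at ht
      have htIoc : t ∈ Ioc (0:ℝ) T := ⟨ht.1, ht.2.le.trans ht₀.2⟩
      have hdd := (hi_t x₀ hx₀ t htIoc).hasDerivAt
        (Icc_mem_nhds htIoc.1 (lt_of_lt_of_le ht.2 ht₀.2))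
      exact (((hasDerivAt_id t).const_mul M).sub hdd).congr_deriv (by simp)
    have hmono : MonotoneOn (fun t => M * t - uinf x₀ t) (Icc 0 t₀) := by
      apply monotoneOn_of_deriv_nonneg (convex_Icc _ _) hcont
      · intro t ht; exact (hd t ht).differentiableAt.differentiableWithinAt
      · intro t ht
        rw [(hd t ht).deriv]
        rw [interior_Icc] at ht
        have hb := hMbound x₀ hcl t ⟨ht.1.le, ht.2.le.trans ht₀.2⟩
        linarith [(abs_le.mp hb).2]
    have h2 := hmono (left_mem_Icc.2 ht₀.1) (right_mem_Icc.2 ht₀.1) ht₀.1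
    have h0 : uinf x₀ 0 = 0 := by rw [hi_init x₀ hcl, hu0]
    simp only [mul_zero, h0, sub_zero] at h2
    linarith
  -- upper bound with ε slack
  have upper : ∀ ε > 0, ∀ x ∈ closure Ω, ∀ t ∈ Icc (0:ℝ) T,
      u x t - uinf x t - ε * t ≤ 0 := by
    intro ε hε
    have hφc : ContinuousOn
        (fun p : EuclideanSpace ℝ (Fin n) × ℝ => u p.1 p.2 - uinf p.1 p.2 - ε * p.2)
        ((closure Ω) ×ˢ Icc (0:ℝ) T) :=
      (hucont.sub hi_cont).sub ((continuous_const.mul continuous_snd).continuousOn)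
    obtain ⟨⟨x₀, t₀⟩, hp₀K, hp₀max⟩ := hKc.exists_isMaxOn hKne hφc
    have hx₀c : x₀ ∈ closure Ω := hp₀K.1
    have ht₀ : t₀ ∈ Icc (0:ℝ) T := hp₀K.2
    suffices hsuff : u x₀ t₀ - uinf x₀ t₀ - ε * t₀ ≤ 0 by
      intro x hx t ht
      exact le_trans (hp₀max (Set.mk_mem_prod hx ht)) hsuff
    by_contra hpos
    push_neg at hpos
    have ht₀pos : 0 < t₀ := by
      rcases eq_or_lt_of_le ht₀.1 with h | h
      · exfalso
        subst h
        rw [huinit x₀ hx₀c, hi_init x₀ hx₀c] at hpos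
        simp at hpos
      · exact h
    have ht₀Ioc : t₀ ∈ Ioc 0 T := ⟨ht₀pos, ht₀.2⟩
    have hx₀Ω : x₀ ∈ Ω := by
      by_contra hxo
      have hfr₀ := hfr x₀ hx₀c hxo
      rw [hubdry x₀ hfr₀ t₀ ht₀Ioc, hi_bdry x₀ hfr₀ t₀ ht₀Ioc] at hpos
      nlinarith
    have hloc : IsLocalMax (fun y => u y t₀ - uinf y t₀) x₀ := by
      filter_upwards [hΩo.mem_nhds hx₀Ω] with y hy
      have := hp₀max (Set.mk_mem_prod (subset_closure hy) ht₀)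
      simp only [Set.mem_setOf_eq] at this
      linarith
    have hlap : laplacian (fun y => u y t₀) x₀ ≤ laplacian (fun y => uinf y t₀) x₀ := by
      unfold laplacian
      exact Finset.sum_le_sum fun i _ =>
        diag_le_of_localMax hΩo hx₀Ω (hux t₀ ht₀Ioc) (hi_x t₀ ht₀Ioc) hloc _
    have hdφ : HasDerivWithinAt (fun t => u x₀ t - uinf x₀ t - ε * t)
        ((laplacian (fun y => u y t₀) x₀
          - k * v₀ x₀ * u x₀ t₀ ^ m * Real.exp (-(k * ∫ τ in (0:ℝ)..t₀, u x₀ τ)))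
          - utinf x₀ t₀ - ε) (Icc 0 T) t₀ := by
      apply HasDerivWithinAt.sub
      · exact HasDerivWithinAt.sub (hueq x₀ hx₀Ω t₀ ht₀Ioc) (hi_t x₀ hx₀Ω t₀ ht₀Ioc)
      · simpa using ((hasDerivAt_id t₀).const_mul ε).hasDerivWithinAt
    have hD := deriv_nonneg_at_right_max ht₀Ioc hdφ (fun t ht => by
      have := hp₀max (Set.mk_mem_prod hx₀c ht)
      simpa [Set.mem_setOf_eq] using this)
    have hLi : Linf x₀ t₀ = laplacian (fun y => uinf y t₀) x₀ := hi_lap x₀ hx₀Ω t₀ ht₀Ioc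
    have hHe : utinf x₀ t₀ = Linf x₀ t₀ := hi_heat x₀ hx₀Ω t₀ ht₀Ioc
    have hr := hreact x₀ hx₀c t₀ ht₀
    rw [hHe, hLi] at hD
    linarith
  -- lower bound with ε slack
  have lower : ∀ ε > 0, ∀ x ∈ closure Ω, ∀ t ∈ Icc (0:ℝ) T,
      uinf x t - M * t - u x t - ε * t ≤ 0 := by
    intro ε hε
    have hφc : ContinuousOn
        (fun p : EuclideanSpace ℝ (Fin n) × ℝ =>
          uinf p.1 p.2 - M * p.2 - u p.1 p.2 - ε * p.2)
        ((closure Ω) ×ˢ Icc (0:ℝ) T) :=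
      ((hi_cont.sub ((continuous_const.mul continuous_snd).continuousOn)).sub hucont).sub
        ((continuous_const.mul continuous_snd).continuousOn)
    obtain ⟨⟨x₀, t₀⟩, hp₀K, hp₀max⟩ := hKc.exists_isMaxOn hKne hφc
    have hx₀c : x₀ ∈ closure Ω := hp₀K.1
    have ht₀ : t₀ ∈ Icc (0:ℝ) T := hp₀K.2
    suffices hsuff : uinf x₀ t₀ - M * t₀ - u x₀ t₀ - ε * t₀ ≤ 0 by
      intro x hx t ht
      exact le_trans (hp₀max (Set.mk_mem_prod hx ht)) hsuff
    by_contra hpos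
    push_neg at hpos
    have ht₀pos : 0 < t₀ := by
      rcases eq_or_lt_of_le ht₀.1 with h | h
      · exfalso
        subst h
        rw [huinit x₀ hx₀c, hi_init x₀ hx₀c] at hpos
        simp at hpos
      · exact h
    have ht₀Ioc : t₀ ∈ Ioc 0 T := ⟨ht₀pos, ht₀.2⟩
    have hx₀Ω : x₀ ∈ Ω := by
      by_contra hxo
      have hfr₀ := hfr x₀ hx₀c hxo
      rw [hubdry x₀ hfr₀ t₀ ht₀Ioc, hi_bdry x₀ hfr₀ t₀ ht₀Ioc] at hpos
      nlinarith
    have hloc : IsLocalMax (fun y => uinf y t₀ - u y t₀) x₀ := by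
      filter_upwards [hΩo.mem_nhds hx₀Ω] with y hy
      have := hp₀max (Set.mk_mem_prod (subset_closure hy) ht₀)
      simp only [Set.mem_setOf_eq] at this
      linarith
    have hlap : laplacian (fun y => uinf y t₀) x₀ ≤ laplacian (fun y => u y t₀) x₀ := by
      unfold laplacian
      exact Finset.sum_le_sum fun i _ =>
        diag_le_of_localMax hΩo hx₀Ω (hi_x t₀ ht₀Ioc) (hux t₀ ht₀Ioc) hloc _
    have hdφ : HasDerivWithinAt (fun t => uinf x₀ t - M * t - u x₀ t - ε * t)
        ((utinf x₀ t₀ - M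
          - (laplacian (fun y => u y t₀) x₀
            - k * v₀ x₀ * u x₀ t₀ ^ m * Real.exp (-(k * ∫ τ in (0:ℝ)..t₀, u x₀ τ))))
          - ε) (Icc 0 T) t₀ := by
      apply HasDerivWithinAt.sub
      · apply HasDerivWithinAt.sub
        · apply HasDerivWithinAt.sub (hi_t x₀ hx₀Ω t₀ ht₀Ioc)
          simpa using ((hasDerivAt_id t₀).const_mul M).hasDerivWithinAt
        · exact hueq x₀ hx₀Ω t₀ ht₀Ioc
      · simpa using ((hasDerivAt_id t₀).const_mul ε).hasDerivWithinAt
    have hD := deriv_nonneg_at_right_max ht₀Ioc hdφ (fun t ht => by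
      have h5 := hp₀max (Set.mk_mem_prod hx₀c ht)
      simp only [Set.mem_setOf_eq] at h5
      show uinf x₀ t - M * t - u x₀ t - ε * t ≤ uinf x₀ t₀ - M * t₀ - u x₀ t₀ - ε * t₀
      linarith)
    have hLi : Linf x₀ t₀ = laplacian (fun y => uinf y t₀) x₀ := hi_lap x₀ hx₀Ω t₀ ht₀Ioc
    have hHe : utinf x₀ t₀ = Linf x₀ t₀ := hi_heat x₀ hx₀Ω t₀ ht₀Ioc
    rw [hHe, hLi] at hD
    have hrpos : 0 < k * v₀ x₀ * u x₀ t₀ ^ m *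
        Real.exp (-(k * ∫ τ in (0:ℝ)..t₀, u x₀ τ)) := by linarith
    have hv₀pos : 0 < v₀ x₀ := by
      rcases lt_or_eq_of_le (hv₀nonneg x₀ hx₀c) with h | h
      · exact h
      · exfalso
        rw [← h, mul_zero, zero_mul, zero_mul] at hrpos
        exact lt_irrefl 0 hrpos
    have hu₀0 : u₀ x₀ = 0 := by
      rcases mul_eq_zero.mp (hsep x₀ hx₀c) with h | h
      · exact h
      · exact absurd h (ne_of_gt hv₀pos)
    have hub := hftc x₀ hx₀Ω hu₀0 t₀ ht₀
    have hu0 := hunonneg x₀ hx₀c t₀ ht₀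
    nlinarith
  -- conclude by letting ε → 0
  intro x hx t ht
  have key : ∀ c : ℝ, (∀ ε > (0:ℝ), c - ε * t ≤ 0) → c ≤ 0 := by
    intro c hc
    by_contra hcp
    push_neg at hcp
    have hεp : 0 < c / (2 * T) := div_pos hcp (by linarith)
    have h1 := hc (c / (2 * T)) hεp
    have h2 : c / (2 * T) * t ≤ c / (2 * T) * T :=
      mul_le_mul_of_nonneg_left ht.2 hεp.le
    have h3 : c / (2 * T) * T = c / 2 := by field_simp
    linarith
  constructor
  · have := key (uinf x t - M * t - u x t) (fun ε hε => lower ε hε x hx t ht)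
    linarith
  · have := key (u x t - uinf x t) (fun ε hε => upper ε hε x hx t ht)
    linarith
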